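/- The revenue of the optimal u-WE classifier decomposes as: max_{c u-WE} R(c) = max over w ∈ [0, min(E[u|A=0], E[u|A=1])] of P(A=0)·R_0*(w) + P(A=1)·R_1*(w). -/

import Mathlib

/-- Probability of group {A = a}. -/
noncomputable def grpProb {X : Type*} [Fintype X] (P : X × Bool → ℝ) (a : Bool) : ℝ :=
  ∑ x : X, P (x, a)

/-- Group-a welfare of a classifier. -/
noncomputable def welfareG {X : Type*} [Fintype X]
    (P : X × Bool → ℝ) (ubar : X × Bool → ℝ) (c : X × Bool → ℝ) (a : Bool) : ℝ :=
  (∑ x : X, P (x, a) * ubar (x, a) * c (x, a)) / grpProb P a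

/-- Bank's revenue of a classifier. -/
noncomputable def revenue {X : Type*} [Fintype X]
    (P : X × Bool → ℝ) (r : X × Bool → ℝ) (c : X × Bool → ℝ) : ℝ :=
  ∑ z : X × Bool, P z * r z * c z

/-- Subgroup-optimal revenue R_a*(w), w.r.t. the conditional distribution of X given A=a. -/
noncomputable def RstarG {X : Type*} [Fintype X]
    (P : X × Bool → ℝ) (r ubar : X × Bool → ℝ) (a : Bool) (w : ℝ) : ℝ :=
  sSup {v : ℝ | ∃ c : X → ℝ, (∀ x, c x ∈ Set.Icc (0:ℝ) 1) ∧
    (∑ x : X, (P (x, a) / grpProb P a) * ubar (x, a) * c x) = w ∧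
    (∑ x : X, (P (x, a) / grpProb P a) * r (x, a) * c x) = v}

/-- Conditional expected utility E[u | A = a]. -/
noncomputable def condEu {X : Type*} [Fintype X]
    (P : X × Bool → ℝ) (ubar : X × Bool → ℝ) (a : Bool) : ℝ :=
  ∑ x : X, (P (x, a) / grpProb P a) * ubar (x, a)

/-- max_{c u-WE} R(c) = max_{w ∈ [0, min(E[u|A=0],E[u|A=1])]}
P(A=0)·R₀*(w) + P(A=1)·R₁*(w). -/
theorem stmt10 {X : Type*} [Fintype X]
    (P : X × Bool → ℝ) (hP : ∀ z, 0 ≤ P z) (hPsum : ∑ z, P z = 1)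
    (h0 : 0 < grpProb P false) (h1 : 0 < grpProb P true)
    (r ubar : X × Bool → ℝ) (hu : ∀ z, 0 ≤ ubar z) :
    sSup {v : ℝ | ∃ c : X × Bool → ℝ, (∀ z, c z ∈ Set.Icc (0:ℝ) 1) ∧
        welfareG P ubar c false = welfareG P ubar c true ∧ revenue P r c = v} =
    sSup {v : ℝ | ∃ w ∈ Set.Icc (0:ℝ) (min (condEu P ubar false) (condEu P ubar true)),
        v = grpProb P false * RstarG P r ubar false w +
            grpProb P true * RstarG P r ubar true w} := by
  classical
  have hg : ∀ a, 0 < grpProb P a := by intro a; cases a; exacts [h0, h1]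
  -- the subgroup feasible sets
  set S : Bool → ℝ → Set ℝ := fun a w =>
    {v : ℝ | ∃ c : X → ℝ, (∀ x, c x ∈ Set.Icc (0:ℝ) 1) ∧
      (∑ x : X, (P (x, a) / grpProb P a) * ubar (x, a) * c x) = w ∧
      (∑ x : X, (P (x, a) / grpProb P a) * r (x, a) * c x) = v} with hSdef
  have hRstar : ∀ a w, RstarG P r ubar a w = sSup (S a w) := fun a w => rfl
  -- welfare rewriting
  have hwel : ∀ (c : X × Bool → ℝ) (a : Bool),
      welfareG P ubar c a = ∑ x : X, (P (x, a) / grpProb P a) * ubar (x, a) * c (x, a) := by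
    intro c a
    unfold welfareG
    rw [Finset.sum_div]
    exact Finset.sum_congr rfl fun x _ => by ring
  -- revenue splitting
  have hrev : ∀ c : X × Bool → ℝ,
      revenue P r c =
        grpProb P false * (∑ x : X, (P (x, false) / grpProb P false) * r (x, false) * c (x, false)) +
        grpProb P true * (∑ x : X, (P (x, true) / grpProb P true) * r (x, true) * c (x, true)) := by
    intro c
    unfold revenue
    rw [Fintype.sum_prod_type, Finset.mul_sum, Finset.mul_sum, ← Finset.sum_add_distrib]
    apply Finset.sum_congr rfl; intro x _
    rw [Fintype.sum_bool]
    field_simp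
    ring
  have hEnn : ∀ a, 0 ≤ condEu P ubar a := by
    intro a
    apply Finset.sum_nonneg; intro x _
    exact mul_nonneg (div_nonneg (hP _) (hg a).le) (hu _)
  -- bounds for the subgroup sets
  set M : Bool → ℝ := fun a => ∑ x : X, (P (x, a) / grpProb P a) * |r (x, a)| with hMdef
  have hSbdd : ∀ a w, M a ∈ upperBounds (S a w) := by
    intro a w v hv
    obtain ⟨c, hc, -, rfl⟩ := hv
    apply Finset.sum_le_sum; intro x _
    have hpg : 0 ≤ P (x, a) / grpProb P a := div_nonneg (hP _) (hg a).le
    have hrc : r (x, a) * c x ≤ |r (x, a)| := by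
      nlinarith [le_abs_self (r (x, a)), abs_nonneg (r (x, a)), (hc x).1, (hc x).2]
    rw [mul_assoc]
    exact mul_le_mul_of_nonneg_left hrc hpg
  have hSBdd : ∀ a w, BddAbove (S a w) := fun a w => ⟨M a, hSbdd a w⟩
  -- nonemptiness of subgroup sets in the welfare range
  have hSne : ∀ a w, 0 ≤ w → w ≤ condEu P ubar a → (S a w).Nonempty := by
    intro a w hw0 hw1
    by_cases hE : condEu P ubar a = 0
    · have hw : w = 0 := le_antisymm (hE ▸ hw1) hw0
      refine ⟨0, fun _ => 0, fun x => ⟨le_refl _, zero_le_one⟩, ?_, by simp⟩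
      simp [hw]
    · have hEpos : 0 < condEu P ubar a := lt_of_le_of_ne (hEnn a) (Ne.symm hE)
      refine ⟨∑ x : X, (P (x, a) / grpProb P a) * r (x, a) * (w / condEu P ubar a),
        fun _ => w / condEu P ubar a, fun x => ⟨div_nonneg hw0 hEpos.le, div_le_one_of_le₀ hw1 hEpos.le⟩,
        ?_, rfl⟩
      rw [← Finset.sum_mul]
      have hEdef : (∑ x : X, (P (x, a) / grpProb P a) * ubar (x, a)) = condEu P ubar a := rfl
      rw [hEdef]
      field_simp
  -- name the two big sets
  set A := {v : ℝ | ∃ c : X × Bool → ℝ, (∀ z, c z ∈ Set.Icc (0:ℝ) 1) ∧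
      welfareG P ubar c false = welfareG P ubar c true ∧ revenue P r c = v} with hAdef
  set B := {v : ℝ | ∃ w ∈ Set.Icc (0:ℝ) (min (condEu P ubar false) (condEu P ubar true)),
      v = grpProb P false * RstarG P r ubar false w +
          grpProb P true * RstarG P r ubar true w} with hBdef
  -- A is bounded above
  have hABdd : BddAbove A := by
    refine ⟨∑ z : X × Bool, |P z * r z|, fun v hv => ?_⟩
    obtain ⟨c, hc, -, rfl⟩ := hv
    apply Finset.sum_le_sum; intro z _
    have h1 := (hc z).1
    have h2 := (hc z).2
    have hPz := hP z
    nlinarith [le_abs_self (P z * r z), abs_nonneg (P z * r z), neg_abs_le (P z * r z)]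
  -- B is bounded above
  have hBBdd : BddAbove B := by
    refine ⟨grpProb P false * M false + grpProb P true * M true, fun v hv => ?_⟩
    obtain ⟨w, hw, rfl⟩ := hv
    have hb : ∀ a, RstarG P r ubar a w ≤ M a := by
      intro a
      rw [hRstar]
      apply csSup_le (hSne a w hw.1 (le_trans hw.2 (by cases a; exacts [min_le_left _ _, min_le_right _ _])))
      exact fun v hv => hSbdd a w hv
    exact add_le_add (mul_le_mul_of_nonneg_left (hb false) (hg false).le)
      (mul_le_mul_of_nonneg_left (hb true) (hg true).le)
  -- 0 ∈ A
  have h0A : (0:ℝ) ∈ A := by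
    refine ⟨fun _ => 0, fun z => ⟨le_refl _, zero_le_one⟩, ?_, ?_⟩ <;>
      simp [welfareG, revenue]
  -- every element of B is ≤ sSup A
  have hBleA : ∀ v ∈ B, v ≤ sSup A := by
    intro v hv
    obtain ⟨w, hw, rfl⟩ := hv
    have hw0 : 0 ≤ w := hw.1
    have hwf : w ≤ condEu P ubar false := le_trans hw.2 (min_le_left _ _)
    have hwt : w ≤ condEu P ubar true := le_trans hw.2 (min_le_right _ _)
    -- key: gluing
    have key : ∀ v0 ∈ S false w, ∀ v1 ∈ S true w,
        grpProb P false * v0 + grpProb P true * v1 ≤ sSup A := by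
      intro v0 hv0 v1 hv1
      obtain ⟨c0, hc0, hW0, hV0⟩ := hv0
      obtain ⟨c1, hc1, hW1, hV1⟩ := hv1
      set c : X × Bool → ℝ := fun z => bif z.2 then c1 z.1 else c0 z.1 with hcdef
      have hcf : ∀ x : X, c (x, false) = c0 x := fun x => rfl
      have hct : ∀ x : X, c (x, true) = c1 x := fun x => rfl
      have hcIcc : ∀ z, c z ∈ Set.Icc (0:ℝ) 1 := by
        rintro ⟨x, a⟩; cases a
        · exact hc0 x
        · exact hc1 x
      have hWf : welfareG P ubar c false = w := by
        rw [hwel]; rw [← hW0]; exact Finset.sum_congr rfl fun x _ => by rw [hcf]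
      have hWt : welfareG P ubar c true = w := by
        rw [hwel]; rw [← hW1]; exact Finset.sum_congr rfl fun x _ => by rw [hct]
      have hsum0 : (∑ x : X, (P (x, false) / grpProb P false) * r (x, false) * c (x, false)) = v0 := by
        rw [← hV0]; exact Finset.sum_congr rfl fun x _ => by rw [hcf]
      have hsum1 : (∑ x : X, (P (x, true) / grpProb P true) * r (x, true) * c (x, true)) = v1 := by
        rw [← hV1]; exact Finset.sum_congr rfl fun x _ => by rw [hct]
      have hmem : grpProb P false * v0 + grpProb P true * v1 ∈ A := by
        exact ⟨c, hcIcc, hWf.trans hWt.symm, by rw [hrev, hsum0, hsum1]⟩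
      exact le_csSup hABdd hmem
    -- conclude by two sup-passes
    have step1 : ∀ v0 ∈ S false w,
        grpProb P false * v0 + grpProb P true * RstarG P r ubar true w ≤ sSup A := by
      intro v0 hv0
      rw [hRstar]
      have hle : sSup (S true w) ≤ (sSup A - grpProb P false * v0) / grpProb P true := by
        apply csSup_le (hSne true w hw0 hwt)
        intro v1 hv1
        rw [le_div_iff₀ (hg true)]
        have := key v0 hv0 v1 hv1
        linarith [this]
      calc grpProb P false * v0 + grpProb P true * sSup (S true w)
          ≤ grpProb P false * v0 +
            grpProb P true * ((sSup A - grpProb P false * v0) / grpProb P true) := by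
            gcongr
        _ = sSup A := by field_simp; ring
    rw [hRstar false w]
    have hle0 : sSup (S false w) ≤
        (sSup A - grpProb P true * RstarG P r ubar true w) / grpProb P false := by
      apply csSup_le (hSne false w hw0 hwf)
      intro v0 hv0
      rw [le_div_iff₀ (hg false)]
      linarith [step1 v0 hv0]
    calc grpProb P false * sSup (S false w) + grpProb P true * RstarG P r ubar true w
        ≤ grpProb P false *
            ((sSup A - grpProb P true * RstarG P r ubar true w) / grpProb P false) +
          grpProb P true * RstarG P r ubar true w := by gcongr
      _ = sSup A := by field_simp; ring
  -- welfare bounds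
  have hwb : ∀ (c : X × Bool → ℝ), (∀ z, c z ∈ Set.Icc (0:ℝ) 1) → ∀ a,
      0 ≤ welfareG P ubar c a ∧ welfareG P ubar c a ≤ condEu P ubar a := by
    intro c hc a
    rw [hwel]
    constructor
    · apply Finset.sum_nonneg; intro x _
      exact mul_nonneg (mul_nonneg (div_nonneg (hP _) (hg a).le) (hu _)) (hc _).1
    · apply Finset.sum_le_sum; intro x _
      have := (hc (x, a)).2
      have hnn : 0 ≤ P (x, a) / grpProb P a * ubar (x, a) :=
        mul_nonneg (div_nonneg (hP _) (hg a).le) (hu _)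
      nlinarith
  -- 0 ≤ sSup B
  have h0B : (0:ℝ) ≤ sSup B := by
    have hmin : (0:ℝ) ≤ min (condEu P ubar false) (condEu P ubar true) :=
      le_min (hEnn false) (hEnn true)
    have hmem : grpProb P false * RstarG P r ubar false 0 +
        grpProb P true * RstarG P r ubar true 0 ∈ B :=
      ⟨0, ⟨le_refl _, hmin⟩, rfl⟩
    have hR0 : ∀ a, 0 ≤ RstarG P r ubar a 0 := by
      intro a
      rw [hRstar]
      refine le_csSup (hSBdd a 0) ⟨fun _ => 0, fun x => ⟨le_refl _, zero_le_one⟩, by simp, by simp⟩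
    have : (0:ℝ) ≤ grpProb P false * RstarG P r ubar false 0 +
        grpProb P true * RstarG P r ubar true 0 := by
      have := hR0 false; have := hR0 true
      have := (hg false).le; have := (hg true).le
      positivity
    exact le_trans this (le_csSup hBBdd hmem)
  -- main antisymmetry
  apply le_antisymm
  · apply Real.sSup_le _ h0B
    intro v hv
    obtain ⟨c, hc, hW, rfl⟩ := hv
    set w := welfareG P ubar c false with hwdef
    have hw0 : 0 ≤ w := (hwb c hc false).1
    have hwf : w ≤ condEu P ubar false := (hwb c hc false).2
    have hwt : w ≤ condEu P ubar true := hW ▸ (hwb c hc true).2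
    have hv0 : (∑ x : X, (P (x, false) / grpProb P false) * r (x, false) * c (x, false)) ∈
        S false w := ⟨fun x => c (x, false), fun x => hc _, (hwel c false).symm, rfl⟩
    have hv1 : (∑ x : X, (P (x, true) / grpProb P true) * r (x, true) * c (x, true)) ∈
        S true w := ⟨fun x => c (x, true), fun x => hc _, by rw [← hwel c true, ← hW], rfl⟩
    have hle0 : (∑ x : X, (P (x, false) / grpProb P false) * r (x, false) * c (x, false)) ≤
        RstarG P r ubar false w := le_csSup (hSBdd false w) hv0
    have hle1 : (∑ x : X, (P (x, true) / grpProb P true) * r (x, true) * c (x, true)) ≤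
        RstarG P r ubar true w := le_csSup (hSBdd true w) hv1
    have hmem : grpProb P false * RstarG P r ubar false w +
        grpProb P true * RstarG P r ubar true w ∈ B :=
      ⟨w, ⟨hw0, le_min hwf hwt⟩, rfl⟩
    calc revenue P r c
        ≤ grpProb P false * RstarG P r ubar false w +
          grpProb P true * RstarG P r ubar true w := by
          rw [hrev]; gcongr
      _ ≤ sSup B := le_csSup hBBdd hmem
  · exact Real.sSup_le hBleA (le_csSup hABdd h0A)
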